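/- Let τ, ρ be complex numbers with 0 ≤ ρ ≤ 1 and τ ≥ 0 real (or more generally parameters for which the series converges), and ξ_1, ..., ξ_k nonzero complex numbers such that |1 - ρ + ρτ^{k-i+1}| < |ξ_i···ξ_k| for every i. Set φ_i = 1 - ρ + ρ·τ^{k-i+1}. Then Σ_{0 < s_1 < ... < s_k} Π_{i=1}^k ( ρ · ξ_i^{-s_i} · φ_i^{s_i - s_{i-1} - 1} ) = Π_{i=1}^k ρ/(ξ_i·ξ_{i+1}···ξ_k - 1 + ρ - τ^{k-i+1}·ρ), where s_0 = 0. -/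

import Mathlib

set_option linter.unnecessarySimpa false

open Finset

private lemma zpow_sum_aux {a : ℂ} (ha : a ≠ 0) {ι : Type*} (s : Finset ι) (c : ι → ℤ) :
    a ^ (∑ i ∈ s, c i) = ∏ i ∈ s, a ^ c i := by
  classical
  induction s using Finset.cons_induction with
  | empty => simp
  | cons i s hi ih => rw [Finset.sum_cons, Finset.prod_cons, zpow_add₀ ha, ih]

private lemma hasSum_pi_prod : ∀ (k : ℕ) (f : Fin k → ℕ → ℂ) (a : Fin k → ℂ),
    (∀ i, HasSum (f i) (a i)) →
    HasSum (fun g : Fin k → ℕ => ∏ i, f i (g i)) (∏ i, a i) := by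
  intro k
  induction k with
  | zero =>
      intro f a _
      have := hasSum_fintype (fun g : Fin 0 → ℕ => ∏ i : Fin 0, f i (g i))
      simpa using this
  | succ n ih =>
      intro f a hf
      have h1 : HasSum (f 0) (a 0) := hf 0
      set T : (Fin n → ℕ) → ℂ := fun v => ∏ i : Fin n, f i.succ (v i) with hT
      have h2 : HasSum T (∏ i : Fin n, a i.succ) :=
        ih (fun i => f i.succ) (fun i => a i.succ) (fun i => hf i.succ)
      have hn1 : Summable fun m : ℕ => ‖f 0 m‖ := summable_norm_iff.2 h1.summable
      have hn2 : Summable fun v : Fin n → ℕ => ‖T v‖ :=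
        summable_norm_iff.2 h2.summable
      have hsum : Summable fun p : ℕ × (Fin n → ℕ) =>
          f 0 p.1 * T p.2 :=
        summable_mul_of_summable_norm hn1 hn2
      have H := h1.mul h2 hsum
      have H3 : HasSum ((fun g : Fin (n+1) → ℕ => ∏ i, f i (g i)) ∘ (Fin.consEquiv fun _ : Fin (n + 1) => ℕ))
          (a 0 * ∏ i : Fin n, a i.succ) := by
        have e : ((fun g : Fin (n+1) → ℕ => ∏ i, f i (g i)) ∘ (Fin.consEquiv fun _ : Fin (n + 1) => ℕ)) = fun x => f 0 x.1 * T x.2 := by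
          funext p
          simp [hT, Fin.prod_univ_succ, Fin.consEquiv]
        rw [e]; exact H
      rw [Equiv.hasSum_iff] at H3
      simpa [Fin.prod_univ_succ] using H3



/-- Step Bernoulli identity: with `φ i = 1 - ρ + ρ τ^{k-i}` (0-indexed `i`, matching the
1-indexed `k-i+1`), nonzero `ξ i`, and `|φ i| < |ξ i ⋯ ξ (k-1)|` for all `i`
(parameters for which the series converges),
`∑_{0 = s 0 < s 1 < ⋯ < s k} ∏_i ρ · ξ i ^ (-s (i+1)) · (φ i)^{s (i+1) - s i - 1}
  = ∏_i ρ / (ξ i ⋯ ξ (k-1) - 1 + ρ - τ^{k-i} ρ)`,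
with absolute convergence (`HasSum` over `ℂ`). -/
theorem step_bernoulli_identity (k : ℕ) (τ ρ : ℂ) (ξ : Fin k → ℂ) (hξ : ∀ i, ξ i ≠ 0)
    (h : ∀ i : Fin k,
      ‖1 - ρ + ρ * τ ^ (k - (i : ℕ))‖ <
        ‖∏ j ∈ Finset.Ici i, ξ j‖) :
    HasSum
      (fun s : {s : Fin (k + 1) → ℕ // s 0 = 0 ∧ StrictMono s} =>
        ∏ i : Fin k,
          ρ * ξ i ^ (-(s.1 i.succ : ℤ)) *
            (1 - ρ + ρ * τ ^ (k - (i : ℕ))) ^ (s.1 i.succ - s.1 i.castSucc - 1))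
      (∏ i : Fin k,
        ρ / ((∏ j ∈ Finset.Ici i, ξ j) - 1 + ρ - τ ^ (k - (i : ℕ)) * ρ)) := by
  classical
  set φ : Fin k → ℂ := fun i => 1 - ρ + ρ * τ ^ (k - (i : ℕ)) with hφ
  set Ξ : Fin k → ℂ := fun i => ∏ j ∈ Finset.Ici i, ξ j with hXi
  have hΞ : ∀ i, Ξ i ≠ 0 := fun i => Finset.prod_ne_zero_iff.2 fun j _ => hξ j
  have habs : ∀ i, ‖φ i‖ < ‖Ξ i‖ := h
  have hlt : ∀ i, ‖φ i / Ξ i‖ < 1 := by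
    intro i
    rw [norm_div, div_lt_one (by simpa using (norm_pos_iff.mpr (hΞ i)))]
    exact habs i
  have hne : ∀ i, Ξ i - φ i ≠ 0 := by
    intro i
    refine sub_ne_zero.2 fun e => ?_
    have := habs i
    rw [e] at this
    exact lt_irrefl _ this
  -- the reparametrization map
  set S : (Fin k → ℕ) → Fin (k + 1) → ℕ := fun g i =>
    (i : ℕ) + ∑ j ∈ Finset.univ.filter (fun j : Fin k => (j : ℕ) < (i : ℕ)), g j with hS
  have hfiltA : ∀ i : Fin k,
      Finset.univ.filter (fun j : Fin k => (j : ℕ) < (i : ℕ)) = Finset.Iio i := by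
    intro i; ext j
    simp only [Finset.mem_filter, Finset.mem_univ, true_and, Finset.mem_Iio, Fin.lt_def]
  have hfiltB : ∀ i : Fin k,
      Finset.univ.filter (fun j : Fin k => (j : ℕ) < (i : ℕ) + 1) = Finset.Iic i := by
    intro i; ext j
    simp only [Finset.mem_filter, Finset.mem_univ, true_and, Finset.mem_Iic, Fin.le_def,
      Nat.lt_succ_iff]
  have hSc : ∀ g (i : Fin k), S g i.castSucc = (i : ℕ) + ∑ j ∈ Finset.Iio i, g j := by
    intro g i
    simp only [hS, Fin.coe_castSucc]
    rw [hfiltA]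
  have hSs : ∀ g (i : Fin k), S g i.succ = (i : ℕ) + 1 + ∑ j ∈ Finset.Iic i, g j := by
    intro g i
    simp only [hS, Fin.val_succ]
    rw [hfiltB]
  have hIic : ∀ (g : Fin k → ℕ) (i : Fin k),
      ∑ j ∈ Finset.Iic i, g j = (∑ j ∈ Finset.Iio i, g j) + g i := by
    intro g i
    rw [← Finset.Iio_insert, Finset.sum_insert (by simp)]
    ring
  have hS0 : ∀ g, S g 0 = 0 := by
    intro g
    simp [hS]
  have hmono : ∀ g, StrictMono (S g) := by
    intro g
    refine Fin.strictMono_iff_lt_succ.2 fun i => ?_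
    rw [hSc, hSs, hIic]
    omega
  set F : (Fin k → ℕ) → {s : Fin (k + 1) → ℕ // s 0 = 0 ∧ StrictMono s} :=
    fun g => ⟨S g, hS0 g, hmono g⟩ with hF
  have hrec : ∀ g (i : Fin k), S g i.succ - S g i.castSucc - 1 = g i := by
    intro g i
    rw [hSc, hSs, hIic]
    omega
  have hinj : Function.Injective F := by
    intro g g' he
    funext i
    have : S g = S g' := congrArg Subtype.val he
    rw [← hrec g i, ← hrec g' i, this]
  have hsurj : Function.Surjective F := by
    rintro ⟨s, h0s, hms⟩
    refine ⟨fun i => s i.succ - s i.castSucc - 1, ?_⟩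
    have hv : ∀ i, S (fun i => s i.succ - s i.castSucc - 1) i = s i := by
      intro i
      induction i using Fin.induction with
      | zero => rw [hS0]; exact h0s.symm
      | succ i ih =>
          have hstep : S (fun i => s i.succ - s i.castSucc - 1) i.succ =
              S (fun i => s i.succ - s i.castSucc - 1) i.castSucc +
                (s i.succ - s i.castSucc - 1) + 1 := by
            rw [hSc, hSs, hIic]; omega
          have hcs : s i.castSucc < s i.succ := hms Fin.castSucc_lt_succ
          rw [hstep, ih]
          omega
    exact Subtype.ext (funext hv)
  -- the factorized summand
  set f : Fin k → ℕ → ℂ := fun i n => ρ * (Ξ i)⁻¹ * (φ i / Ξ i) ^ n with hf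
  have hfs : ∀ i, HasSum (f i) (ρ / (Ξ i - φ i)) := by
    intro i
    have hg := (hasSum_geometric_of_norm_lt_one (hlt i)).mul_left (ρ * (Ξ i)⁻¹)
    have h1 : (1 : ℂ) - φ i / Ξ i = (Ξ i - φ i) / Ξ i := by
      rw [sub_div, div_self (hΞ i)]
    rw [h1, inv_div] at hg
    have e : ρ / (Ξ i - φ i) = ρ * (Ξ i)⁻¹ * (Ξ i / (Ξ i - φ i)) := by
      rw [mul_assoc, div_eq_mul_inv (Ξ i), inv_mul_cancel_left₀ (hΞ i), div_eq_mul_inv]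
    rw [e]; exact hg
  have main := hasSum_pi_prod k f _ hfs
  -- key product swap
  have key : ∀ g : Fin k → ℕ,
      (∏ i : Fin k, ξ i ^ (-((S g i.succ : ℕ) : ℤ))) =
        ∏ i : Fin k, (Ξ i) ^ (-(1 + (g i : ℤ))) := by
    intro g
    have step1 : (∏ i : Fin k, (Ξ i) ^ (-(1 + (g i : ℤ)))) =
        ∏ i : Fin k, ∏ j ∈ Finset.Ici i, (ξ j) ^ (-(1 + (g i : ℤ))) := by
      refine Finset.prod_congr rfl fun i _ => ?_
      rw [hXi]
      exact (Finset.prod_zpow ξ (Finset.Ici i) _).symm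
    have step2 : (∏ i : Fin k, ∏ j ∈ Finset.Ici i, (ξ j) ^ (-(1 + (g i : ℤ)))) =
        ∏ j : Fin k, ∏ i ∈ Finset.Iic j, (ξ j) ^ (-(1 + (g i : ℤ))) := by
      refine Finset.prod_comm' ?_
      intro i j
      simp
    have step3 : ∀ j : Fin k,
        (∏ i ∈ Finset.Iic j, (ξ j) ^ (-(1 + (g i : ℤ)))) =
          (ξ j) ^ (-((S g j.succ : ℕ) : ℤ)) := by
      intro j
      rw [← zpow_sum_aux (hξ j)]
      congr 1
      rw [hSs, Finset.sum_neg_distrib, Finset.sum_add_distrib, Finset.sum_const, Fin.card_Iic]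
      push_cast
      ring
    rw [step1, step2]
    exact (Finset.prod_congr rfl fun j _ => step3 j).symm
  -- conclude
  have hterm : ∀ g : Fin k → ℕ,
      (∏ i : Fin k, ρ * ξ i ^ (-(((F g).1 i.succ : ℕ) : ℤ)) *
        φ i ^ ((F g).1 i.succ - (F g).1 i.castSucc - 1)) = ∏ i : Fin k, f i (g i) := by
    intro g
    have e1 : (∏ i : Fin k, ρ * ξ i ^ (-(((F g).1 i.succ : ℕ) : ℤ)) *
        φ i ^ ((F g).1 i.succ - (F g).1 i.castSucc - 1)) =
        (∏ i : Fin k, ρ * φ i ^ (g i)) * ∏ i : Fin k, ξ i ^ (-((S g i.succ : ℕ) : ℤ)) := by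
      rw [← Finset.prod_mul_distrib]
      refine Finset.prod_congr rfl fun i _ => ?_
      rw [hF]
      simp only [hrec g i]
      ring
    rw [e1, key, ← Finset.prod_mul_distrib]
    refine Finset.prod_congr rfl fun i _ => ?_
    show ρ * φ i ^ g i * Ξ i ^ (-(1 + (g i : ℤ))) = ρ * (Ξ i)⁻¹ * (φ i / Ξ i) ^ g i
    rw [div_pow,
      show -(1 + (g i : ℤ)) = (-1) + -((g i : ℕ) : ℤ) by ring,
      zpow_add₀ (hΞ i), zpow_neg, zpow_one, zpow_neg, zpow_natCast]
    ring
  have goalval : (∏ i : Fin k,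
      ρ / ((∏ j ∈ Finset.Ici i, ξ j) - 1 + ρ - τ ^ (k - (i : ℕ)) * ρ)) =
      ∏ i : Fin k, ρ / (Ξ i - φ i) := by
    refine Finset.prod_congr rfl fun i _ => ?_
    rw [hXi, hφ]
    ring_nf
  rw [goalval]
  refine ((Equiv.ofBijective F ⟨hinj, hsurj⟩).hasSum_iff).1 ?_
  have : (fun s : {s : Fin (k + 1) → ℕ // s 0 = 0 ∧ StrictMono s} =>
        ∏ i : Fin k, ρ * ξ i ^ (-(s.1 i.succ : ℤ)) *
          φ i ^ (s.1 i.succ - s.1 i.castSucc - 1)) ∘ (Equiv.ofBijective F ⟨hinj, hsurj⟩) =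
      fun g : Fin k → ℕ => ∏ i : Fin k, f i (g i) := by
    funext g
    exact hterm g
  rw [this]
  exact main
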